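/- arXiv:2205.04499 — 4 statements merged into one kernel-verified Lean document; each statement's English description precedes it below -/
import Mathlib

section
/- Let Γ be a finite group, k an algebraically closed field, σ an automorphism of Γ of order ℓ (a prime, invertible in k or not—no assumption needed), and V an irreducible k-linear representation of Γ such that V is isomorphic to V ∘ σ as a Γ-representation. Then there exists an extension of the Γ-action on V to an action of the semidirect product Γ ⋊ ⟨σ⟩, and any two such extensions differ by a character of ⟨σ⟩; in particular if k contains no nontrivial ℓ-th roots of unity other than those making ℓ-th roots unique (e.g. if x ↦ x^ℓ is bijective on k^×), the extension is unique. -/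
theorem my_schur
    (k : Type*) [Field k] [IsAlgClosed k]
    (Γ : Type*) [Group Γ]
    (V : Type*) [AddCommGroup V] [Module k V] [FiniteDimensional k V] [Nontrivial V]
    (ρ : Representation k Γ V)
    (hirr : ∀ p : Submodule k V, (∀ g : Γ, p.map (ρ g) ≤ p) → p = ⊥ ∨ p = ⊤)
    (f : V →ₗ[k] V) (hf : ∀ g : Γ, f ∘ₗ ρ g = ρ g ∘ₗ f) :
    ∃ c : k, f = c • (1 : V →ₗ[k] V) := by
  obtain ⟨c, hc⟩ := Module.End.exists_eigenvalue (f : Module.End k V)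
  obtain ⟨x, hx⟩ := hc.exists_hasEigenvector
  refine ⟨c, ?_⟩
  set p : Submodule k V := LinearMap.ker (f - c • (1 : V →ₗ[k] V)) with hp
  have hmem : ∀ z : V, z ∈ p ↔ f z = c • z := by
    intro z
    simp [hp, LinearMap.mem_ker, sub_eq_zero]
  have hinv : ∀ g : Γ, p.map (ρ g) ≤ p := by
    intro g y hy
    rw [Submodule.mem_map] at hy
    obtain ⟨z, hz, rfl⟩ := hy
    rw [hmem] at hz ⊢
    have := congrArg (fun h : V →ₗ[k] V => h z) (hf g)
    simp only [LinearMap.comp_apply] at this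
    rw [this, hz, map_smul]
  rcases hirr p hinv with h | h
  · exfalso
    have hxp : x ∈ p := (hmem x).mpr hx.apply_eq_smul
    rw [h] at hxp
    exact hx.right (by simpa using hxp)
  · ext y
    have : y ∈ p := h ▸ Submodule.mem_top
    rw [hmem] at this
    simpa using this

-- intertwiner powers
theorem my_pow_intertwine
    (k : Type*) [Field k]
    (Γ : Type*) [Group Γ]
    (σ : MulAut Γ)
    (V : Type*) [AddCommGroup V] [Module k V]
    (ρ : Representation k Γ V)
    (E : V →ₗ[k] V) (hE : ∀ g : Γ, E ∘ₗ ρ g = ρ (σ g) ∘ₗ E)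
    (n : ℕ) (g : Γ) : (E ^ n) ∘ₗ ρ g = ρ ((σ ^ n) g) ∘ₗ (E ^ n) := by
  induction n generalizing g with
  | zero =>
    ext x; simp
  | succ m ih =>
    have h1 : E ^ (m + 1) = (E ^ m) ∘ₗ E := by rw [pow_succ]; rfl
    have h2 : (σ ^ (m + 1)) g = (σ ^ m) (σ g) := by rw [pow_succ, MulAut.mul_apply]
    rw [h1, h2, LinearMap.comp_assoc, hE g, ← LinearMap.comp_assoc, ih (σ g),
      LinearMap.comp_assoc]


/-- Let `Γ` be a finite group, `k` an algebraically closed field, `σ` an automorphism of `Γ`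
of order `ℓ` (a prime), and `V` an irreducible `k`-linear representation `ρ` of `Γ` with
`V ≅ V ∘ σ`. An extension of the action to `Γ ⋊ ⟨σ⟩` amounts to an endomorphism `A` with
`A ρ(g) = ρ(σ g) A` and `A^ℓ = 1`. Then: such an extension exists; any two extensions differ
by a character of `⟨σ⟩`, i.e. by a scalar `c` with `c^ℓ = 1`; and if `x ↦ x^ℓ` is bijective
on `k^×`, the extension is unique. -/
theorem extension_to_semidirect_product
    (ℓ : ℕ) (hℓ : ℓ.Prime)
    (k : Type*) [Field k] [IsAlgClosed k]
    (Γ : Type*) [Group Γ] [Finite Γ]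
    (σ : MulAut Γ) (hσ : σ ^ ℓ = 1)
    (V : Type*) [AddCommGroup V] [Module k V] [FiniteDimensional k V] [Nontrivial V]
    (ρ : Representation k Γ V)
    (hirr : ∀ p : Submodule k V, (∀ g : Γ, p.map (ρ g) ≤ p) → p = ⊥ ∨ p = ⊤)
    (hiso : ∃ e : V ≃ₗ[k] V,
      ∀ g : Γ, (e : V →ₗ[k] V) ∘ₗ ρ g = ρ (σ g) ∘ₗ (e : V →ₗ[k] V)) :
    (∃ A : V →ₗ[k] V, (∀ g : Γ, A ∘ₗ ρ g = ρ (σ g) ∘ₗ A) ∧ A ^ ℓ = 1) ∧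
    (∀ A B : V →ₗ[k] V,
      ((∀ g : Γ, A ∘ₗ ρ g = ρ (σ g) ∘ₗ A) ∧ A ^ ℓ = 1) →
      ((∀ g : Γ, B ∘ₗ ρ g = ρ (σ g) ∘ₗ B) ∧ B ^ ℓ = 1) →
      ∃ c : k, c ^ ℓ = 1 ∧ B = c • A) ∧
    (Function.Bijective (fun c : kˣ => c ^ ℓ) →
      ∀ A B : V →ₗ[k] V,
      ((∀ g : Γ, A ∘ₗ ρ g = ρ (σ g) ∘ₗ A) ∧ A ^ ℓ = 1) →
      ((∀ g : Γ, B ∘ₗ ρ g = ρ (σ g) ∘ₗ B) ∧ B ^ ℓ = 1) →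
      A = B) := by
  obtain ⟨x₀, hx₀⟩ := exists_ne (0 : V)
  have smul_one_eq : ∀ c : k, c • (1 : V →ₗ[k] V) = 1 → c = 1 := by
    intro c h
    have := congrArg (fun f : V →ₗ[k] V => f x₀) h
    simp only [LinearMap.smul_apply, Module.End.one_apply] at this
    by_contra hc
    exact hx₀ (by
      have : (c - 1) • x₀ = 0 := by rw [sub_smul, this, one_smul, sub_self]
      exact (smul_eq_zero.mp this).resolve_left (sub_ne_zero.mpr hc) ▸ rfl)
  -- uniqueness up to character
  have step2 : ∀ A B : V →ₗ[k] V,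
      ((∀ g : Γ, A ∘ₗ ρ g = ρ (σ g) ∘ₗ A) ∧ A ^ ℓ = 1) →
      ((∀ g : Γ, B ∘ₗ ρ g = ρ (σ g) ∘ₗ B) ∧ B ^ ℓ = 1) →
      ∃ c : k, c ^ ℓ = 1 ∧ B = c • A := by
    rintro A B ⟨hA, hAℓ⟩ ⟨hB, hBℓ⟩
    have hℓ1 : ℓ - 1 + 1 = ℓ := Nat.succ_pred_eq_of_pos hℓ.pos
    have hAinv : A ^ (ℓ - 1) * A = 1 := by rw [← pow_succ, hℓ1, hAℓ]
    have hAinv' : A * A ^ (ℓ - 1) = 1 := by rw [← pow_succ', hℓ1, hAℓ]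
    set f : V →ₗ[k] V := B ∘ₗ A ^ (ℓ - 1) with hf
    have hcomm : ∀ g : Γ, f ∘ₗ ρ g = ρ g ∘ₗ f := by
      intro g
      rw [hf, LinearMap.comp_assoc,
        my_pow_intertwine k Γ σ V ρ A hA (ℓ - 1) g, ← LinearMap.comp_assoc,
        hB ((σ ^ (ℓ - 1)) g), LinearMap.comp_assoc]
      congr 2
      have h2 : σ * σ ^ (ℓ - 1) = 1 := by rw [← pow_succ', hℓ1, hσ]
      calc σ ((σ ^ (ℓ - 1)) g) = (σ * σ ^ (ℓ - 1)) g := rfl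
        _ = g := by rw [h2]; rfl
    obtain ⟨c, hc⟩ := my_schur k Γ V ρ hirr f hcomm
    have hBA : B = c • A := by
      have : f * A = (c • (1 : V →ₗ[k] V)) * A := by rw [← hc]
      have hfA : f * A = B := by
        show (B * A ^ (ℓ - 1)) * A = B
        rw [mul_assoc, hAinv, mul_one]
      rw [hfA] at this
      rw [this, smul_mul_assoc, one_mul]
    refine ⟨c, ?_, hBA⟩
    have : (c • A) ^ ℓ = 1 := by rw [← hBA, hBℓ]
    rw [smul_pow, hAℓ] at this
    exact smul_one_eq _ this
  refine ⟨?_, step2, ?_⟩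
  · -- existence
    obtain ⟨e, he⟩ := hiso
    set E : V →ₗ[k] V := (e : V →ₗ[k] V) with hEdef
    have hcomm : ∀ g : Γ, (E ^ ℓ) ∘ₗ ρ g = ρ g ∘ₗ (E ^ ℓ) := by
      intro g
      have := my_pow_intertwine k Γ σ V ρ E he ℓ g
      rwa [hσ] at this
    obtain ⟨lam, hlam⟩ := my_schur k Γ V ρ hirr (E ^ ℓ) hcomm
    have hlam0 : lam ≠ 0 := by
      rintro rfl
      rw [zero_smul] at hlam
      have hinj : Function.Injective (E ^ ℓ) :=
        Module.End.iterate_injective e.injective ℓ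
      have := hinj (a₁ := x₀) (a₂ := 0) (by rw [hlam]; simp)
      exact hx₀ this
    obtain ⟨mu, hmu⟩ := IsAlgClosed.exists_pow_nat_eq lam hℓ.pos
    have hmu0 : mu ≠ 0 := by
      rintro rfl
      rw [zero_pow hℓ.pos.ne'] at hmu
      exact hlam0 hmu.symm
    refine ⟨mu⁻¹ • E, ?_, ?_⟩
    · intro g
      rw [LinearMap.smul_comp, he g, LinearMap.comp_smul]
    · rw [smul_pow, hlam, inv_pow, hmu, smul_smul, inv_mul_cancel₀ hlam0, one_smul]
  · -- uniqueness
    intro hbij A B hA hB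
    obtain ⟨c, hcℓ, hBA⟩ := step2 A B hA hB
    have hc0 : c ≠ 0 := by
      rintro rfl
      rw [zero_pow hℓ.pos.ne'] at hcℓ
      exact zero_ne_one hcℓ
    have : (Units.mk0 c hc0) ^ ℓ = (1 : kˣ) ^ ℓ := by
      ext
      simpa using hcℓ
    have hc1 : (Units.mk0 c hc0) = 1 := hbij.injective this
    have : c = 1 := by
      have := congrArg Units.val hc1
      simpa using this
    rw [hBA, this, one_smul]
end

section
/- Let ℓ > n be a prime, E/ℚ_ℓ a finite extension with ring of integers O_E, uniformizer ϖ, residue field k_E. Let L be a free O_E-module of rank n with a decomposition L = ⊕_{i∈ℤ} L_i (almost all zero), and let N : L → L be an O_E-linear nilpotent endomorphism with N(L_i) ⊆ L_{i-2} such that for each k ≥ 0, N^k restricts to an isomorphism L_k → L_{-k} over E (i.e. after inverting ϖ). Suppose that the mod-ϖ reduction N̄ satisfies Jord(N̄) = Jord(N), i.e. dim_E ker(N^k ⊗ E) = dim_{k_E} ker(N̄^k) for all k ≥ 0. Then for each k ≥ 0 the reduction N̄^k restricts to an isomorphism L̄_k → L̄_{-k}, where L̄_i = L_i ⊗ k_E.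 -/
open TensorProduct DirectSum

section Aux

variable {R : Type*} [CommRing R] {L L' : Type*} [AddCommGroup L] [Module R L]
  [AddCommGroup L'] [Module R L'] (A : Type*) [CommRing A] [Algebra R A]

lemma aux_range_baseChange_subtype (p : Submodule R L) :
    LinearMap.range (p.subtype.baseChange A) = p.baseChange A := by
  apply le_antisymm
  · rintro x ⟨y, rfl⟩
    induction y using TensorProduct.induction_on with
    | zero => simp
    | tmul a m => simpa using Submodule.tmul_mem_baseChange_of_mem a m.2
    | add u v hu hv => rw [map_add]; exact Submodule.add_mem _ hu hv
  · rw [Submodule.baseChange_eq_span, Submodule.span_le]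
    rintro x ⟨m, hm, rfl⟩
    exact ⟨1 ⊗ₜ ⟨m, hm⟩, by simp⟩

lemma aux_baseChange_mono {p q : Submodule R L} (h : p ≤ q) :
    p.baseChange A ≤ q.baseChange A :=
  Submodule.baseChange_mono A h

lemma aux_eqOn_baseChange {f g : L →ₗ[R] L'} {p : Submodule R L}
    (h : ∀ y ∈ p, f y = g y) :
    ∀ x ∈ p.baseChange A, f.baseChange A x = g.baseChange A x := by
  intro x hx
  rw [Submodule.baseChange_eq_span] at hx
  induction hx using Submodule.span_induction with
  | mem y hy =>
    obtain ⟨m, hm, rfl⟩ := hy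
    simp [TensorProduct.mk_apply, h m hm]
  | zero => simp
  | add u v _ _ hu hv => rw [map_add, map_add, hu, hv]
  | smul a u _ hu => rw [map_smul, map_smul, hu]

lemma aux_id_on_baseChange {f : L →ₗ[R] L} {p : Submodule R L}
    (h : ∀ y ∈ p, f y = y) :
    ∀ x ∈ p.baseChange A, f.baseChange A x = x := by
  intro x hx
  have := aux_eqOn_baseChange A (g := LinearMap.id) (fun y hy => h y hy) x hx
  rwa [LinearMap.baseChange_id, LinearMap.id_apply] at this

lemma aux_zero_on_baseChange {f : L →ₗ[R] L'} {p : Submodule R L}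
    (h : ∀ y ∈ p, f y = 0) :
    ∀ x ∈ p.baseChange A, f.baseChange A x = 0 := by
  intro x hx
  have hz : (0 : L →ₗ[R] L').baseChange A = 0 := by ext; simp
  have := aux_eqOn_baseChange A (f := f) (g := (0 : L →ₗ[R] L'))
    (fun y hy => by simp [h y hy]) x hx
  rwa [hz, LinearMap.zero_apply] at this

lemma aux_map_baseChange_le (f : L →ₗ[R] L') (p : Submodule R L) :
    Submodule.map (f.baseChange A) (p.baseChange A) ≤ (p.map f).baseChange A := by
  rintro x ⟨y, hy, rfl⟩
  rw [SetLike.mem_coe, Submodule.baseChange_eq_span] at hy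
  induction hy using Submodule.span_induction with
  | mem y hy =>
    obtain ⟨m, hm, rfl⟩ := hy
    simpa using Submodule.tmul_mem_baseChange_of_mem 1 (Submodule.mem_map_of_mem hm)
  | zero => simpa using Submodule.zero_mem _
  | add u v _ _ hu hv => rw [map_add]; exact Submodule.add_mem _ hu hv
  | smul a u _ hu => rw [map_smul]; exact Submodule.smul_mem _ a hu

lemma aux_baseChange_ker_le (f : L →ₗ[R] L') :
    (LinearMap.ker f).baseChange A ≤ LinearMap.ker (f.baseChange A) := by
  intro x hx
  rw [LinearMap.mem_ker]
  exact aux_zero_on_baseChange A (fun y hy => hy) x hx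

lemma aux_ker_baseChange_flat [Module.Flat R A] (f : L →ₗ[R] L') :
    LinearMap.ker (f.baseChange A) = (LinearMap.ker f).baseChange A := by
  refine le_antisymm ?_ (aux_baseChange_ker_le A f)
  intro x hx
  have hexact : Function.Exact ((LinearMap.ker f).subtype) f := by
    rw [LinearMap.exact_iff]
    exact (Submodule.range_subtype _).symm
  have h2 := Module.Flat.lTensor_exact A hexact
  have hx' : (f.lTensor A) x = 0 := by
    rw [← LinearMap.baseChange_eq_ltensor]; exact hx
  obtain ⟨y, hy⟩ := (h2 x).mp hx'
  rw [← aux_range_baseChange_subtype]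
  refine ⟨y, ?_⟩
  show ((LinearMap.ker f).subtype.baseChange A : _ → _) y = x
  rw [LinearMap.baseChange_eq_ltensor]
  exact hy

lemma aux_finrank_baseChange (F : Type*) [Field F] [Algebra R F] [StrongRankCondition R]
    (p : Submodule R L) [Module.Free R p] [Module.Finite R p]
    (π : L →ₗ[R] L) (h1 : ∀ x ∈ p, π x = x) (h2 : ∀ x, π x ∈ p) :
    Module.finrank F (p.baseChange F) = Module.finrank R p := by
  set τ : L →ₗ[R] p := LinearMap.codRestrict p π h2 with hτdef
  have hτ : τ.comp p.subtype = LinearMap.id := by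
    refine LinearMap.ext fun x => Subtype.ext ?_
    simp [hτdef, h1 x x.2]
  have hcomp : (τ.baseChange F).comp (p.subtype.baseChange F) = LinearMap.id := by
    rw [← LinearMap.baseChange_comp, hτ, LinearMap.baseChange_id]
  have hinj : Function.Injective (p.subtype.baseChange F) := by
    intro a b hab
    have h1' := DFunLike.congr_fun hcomp a
    have h2' := DFunLike.congr_fun hcomp b
    simp only [LinearMap.comp_apply, LinearMap.id_apply] at h1' h2'
    rw [← h1', ← h2', hab]
  rw [← aux_range_baseChange_subtype]
  rw [LinearMap.finrank_range_of_inj hinj]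
  exact Module.finrank_baseChange

lemma aux_exists_proj (p : Submodule R L) [Module.Projective R (L ⧸ p)] :
    ∃ π : L →ₗ[R] L, (∀ x ∈ p, π x = x) ∧ (∀ x, π x ∈ p) := by
  obtain ⟨s, hs⟩ := Module.projective_lifting_property p.mkQ LinearMap.id p.mkQ_surjective
  refine ⟨LinearMap.id - s.comp p.mkQ, fun x hx => ?_, fun x => ?_⟩
  · have h0 : p.mkQ x = 0 := by
      simpa [Submodule.mkQ_apply] using (Submodule.Quotient.mk_eq_zero p).mpr hx
    simp [LinearMap.sub_apply, h0]
  · have h1 : p.mkQ (s (p.mkQ x)) = p.mkQ x := DFunLike.congr_fun hs (p.mkQ x)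
    have h0 : p.mkQ (x - s (p.mkQ x)) = 0 := by
      rw [map_sub, h1, sub_self]
    have : x - s (p.mkQ x) ∈ LinearMap.ker p.mkQ := h0
    rwa [Submodule.ker_mkQ] at this

lemma aux_finrank_map_of_inj {F : Type*} [Field F] {V : Type*} [AddCommGroup V] [Module F V]
    (g : V →ₗ[F] V) (p : Submodule F V)
    (h : ∀ x ∈ p, g x = 0 → x = 0) :
    Module.finrank F (p.map g) = Module.finrank F p := by
  have hinj : Function.Injective (g.comp p.subtype) := by
    rw [← LinearMap.ker_eq_bot]
    ext z
    simp only [LinearMap.mem_ker, Submodule.mem_bot, LinearMap.comp_apply]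
    constructor
    · intro hz
      exact Subtype.ext (h z z.2 hz)
    · rintro rfl; simp
  have := LinearMap.finrank_range_of_inj hinj
  rwa [LinearMap.range_comp, Submodule.range_subtype] at this

end Aux

/-- Let `ℓ > n` be a prime, `O` (the ring of integers of a finite extension `E/ℚ_ℓ`) a
complete DVR with residue field `k_E` of characteristic `ℓ`, fraction field `K = E`.
Let `L` be a free `O`-module of rank `n` with a grading `L = ⊕_{i∈ℤ} L_i` and a nilpotent
endomorphism `N` with `N(L_i) ⊆ L_{i-2}`, such that for each `j ≥ 0` the map `N^j` restricts
to an isomorphism `L_j → L_{-j}` after base change to `K`. If the mod-`ϖ` reduction `N̄`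
satisfies `Jord(N̄) = Jord(N)` (i.e. `dim_K ker((N ⊗ K)^j) = dim_{k_E} ker(N̄^j)` for all
`j`), then for each `j ≥ 0` the reduction `N̄^j` restricts to an isomorphism
`L̄_j → L̄_{-j}`. -/
theorem graded_iso_mod_p_of_jordan_type_equality
    (ℓ n : ℕ) [Fact ℓ.Prime] (hn : n < ℓ)
    (R : Type*) [CommRing R] [IsDomain R] [IsDiscreteValuationRing R]
    [IsAdicComplete (IsLocalRing.maximalIdeal R) R]
    [CharP (IsLocalRing.ResidueField R) ℓ]
    (L : Type*) [AddCommGroup L] [Module R L] [Module.Free R L] [Module.Finite R L]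
    (hrank : Module.finrank R L = n)
    (M : ℤ → Submodule R L) (hdirect : DirectSum.IsInternal M)
    (N : L →ₗ[R] L) (hnil : IsNilpotent N)
    (hNM : ∀ i : ℤ, (M i).map N ≤ M (i - 2))
    (K : Type*) [Field K] [Algebra R K] [IsFractionRing R K]
    (hbijK : ∀ j : ℕ,
      Submodule.map ((N.baseChange K) ^ j) ((M (j : ℤ)).baseChange K) =
          (M (-(j : ℤ))).baseChange K ∧
        ∀ x ∈ (M (j : ℤ)).baseChange K, ((N.baseChange K) ^ j) x = 0 → x = 0)
    (hjord : ∀ j : ℕ,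
      Module.finrank K (LinearMap.ker ((N.baseChange K) ^ j)) =
        Module.finrank (IsLocalRing.ResidueField R)
          (LinearMap.ker ((N.baseChange (IsLocalRing.ResidueField R)) ^ j))) :
    ∀ j : ℕ,
      Submodule.map ((N.baseChange (IsLocalRing.ResidueField R)) ^ j)
          ((M (j : ℤ)).baseChange (IsLocalRing.ResidueField R)) =
        (M (-(j : ℤ))).baseChange (IsLocalRing.ResidueField R) ∧
      ∀ x ∈ (M (j : ℤ)).baseChange (IsLocalRing.ResidueField R),
        ((N.baseChange (IsLocalRing.ResidueField R)) ^ j) x = 0 → x = 0 := by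
  intro j
  classical
  set k := IsLocalRing.ResidueField R with hk
  haveI : IsNoetherian R L := isNoetherian_of_isNoetherianRing_of_finite R L
  haveI : Module.Flat R K := IsLocalization.flat K (nonZeroDivisors R)
  -- the projections attached to the internal direct sum decomposition
  let e : L ≃ₗ[R] ⨁ i, ↥(M i) :=
    (LinearEquiv.ofBijective (DirectSum.coeLinearMap M) hdirect).symm
  let π : ℤ → (L →ₗ[R] L) := fun i =>
    (M i).subtype ∘ₗ (DirectSum.component R ℤ (fun i => ↥(M i)) i) ∘ₗ e.toLinearMap
  have hπ_apply : ∀ (i : ℤ) (x : L), π i x = ((e x) i : L) := fun i x => rfl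
  have hπ_mem : ∀ (i : ℤ) (x : L), π i x ∈ M i := fun i x => ((e x) i).2
  have hπ_id : ∀ (i : ℤ), ∀ x ∈ M i, π i x = x := by
    intro i x hx
    rw [hπ_apply]
    exact congrArg Subtype.val (hdirect.ofBijective_coeLinearMap_of_mem hx)
  have hπ_ne : ∀ (i i' : ℤ), i' ≠ i → ∀ x ∈ M i', π i x = 0 := by
    intro i i' hne x hx
    rw [hπ_apply]
    exact congrArg Subtype.val (hdirect.ofBijective_coeLinearMap_of_mem_ne hne hx)
  have htop : ∀ x : L, x ∈ ⨆ i, M i := fun x => by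
    rw [hdirect.submodule_iSup_eq_top]; trivial
  -- iterated grading property of N
  have hpow : ∀ (m : ℕ) (i : ℤ), (M i).map (N ^ m) ≤ M (i - 2 * m) := by
    intro m
    induction m with
    | zero =>
      intro i
      rw [pow_zero]
      simp [Module.End.one_eq_id, Submodule.map_id]
    | succ m ih =>
      intro i
      have harith : i - 2 * ((m : ℤ) + 1) = i - 2 - 2 * m := by ring
      have hcomp : (N ^ (m + 1) : L →ₗ[R] L) = (N ^ m).comp N := by
        rw [pow_succ, Module.End.mul_eq_comp]
      rw [hcomp, Submodule.map_comp]
      push_cast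
      rw [harith]
      exact le_trans (Submodule.map_mono (hNM i)) (ih (i - 2))
  -- the complement of M j
  let Q : Submodule R L := ⨆ s : {i : ℤ // i ≠ (j : ℤ)}, M s.1
  have hsub : ∀ x : L, x - π (j : ℤ) x ∈ Q := by
    intro x
    refine Submodule.iSup_induction (motive := fun y => y - π (j : ℤ) y ∈ Q) M (htop x) ?_ ?_ ?_
    · intro i y hy
      by_cases hij : i = (j : ℤ)
      · subst hij
        rw [hπ_id _ _ hy, sub_self]
        exact Q.zero_mem
      · rw [hπ_ne _ _ hij _ hy, sub_zero]
        exact Submodule.mem_iSup_of_mem ⟨i, hij⟩ hy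
    · simp
    · intro y z hy hz
      have heq : (y + z) - π (j : ℤ) (y + z) = (y - π (j : ℤ) y) + (z - π (j : ℤ) z) := by
        rw [map_add]; abel
      rw [heq]
      exact Q.add_mem hy hz
  have hQ0 : ∀ x ∈ Q, π (j : ℤ) x = 0 := by
    intro x hx
    refine Submodule.iSup_induction (motive := fun y => π (j : ℤ) y = 0)
      (fun s : {i : ℤ // i ≠ (j : ℤ)} => M s.1) hx ?_ (map_zero _) ?_
    · rintro ⟨i, hij⟩ y hy
      exact hπ_ne _ _ hij _ hy
    · intro y z hy hz
      rw [map_add, hy, hz, add_zero]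
  -- commutation of N^j with the projections
  have hcomm : ∀ x : L, π (-(j : ℤ)) ((N ^ j) x) = (N ^ j) (π (j : ℤ) x) := by
    intro x
    refine Submodule.iSup_induction
      (motive := fun y => π (-(j : ℤ)) ((N ^ j) y) = (N ^ j) (π (j : ℤ) y)) M (htop x) ?_ (by simp) ?_
    · intro i y hy
      by_cases hij : i = (j : ℤ)
      · subst hij
        have hmem : (N ^ j) y ∈ M (-(j : ℤ)) := by
          have h1 := hpow j (j : ℤ) (Submodule.mem_map_of_mem hy)
          have harith : (j : ℤ) - 2 * j = -(j : ℤ) := by ring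
          rwa [harith] at h1
        rw [hπ_id _ _ hmem, hπ_id _ _ hy]
      · have hmem : (N ^ j) y ∈ M (i - 2 * j) := hpow j i (Submodule.mem_map_of_mem hy)
        rw [hπ_ne _ _ (by omega : i - 2 * (j : ℤ) ≠ -(j : ℤ)) _ hmem,
          hπ_ne _ _ hij _ hy, map_zero]
    · intro y z hy hz
      simp only [map_add, hy, hz]
  -- injectivity of y ↦ 1 ⊗ y into K ⊗ L
  have hmk_inj : Function.Injective (fun y : L => (1 : K) ⊗ₜ[R] y) := by
    have hfl : Function.Injective ((Algebra.linearMap R K).rTensor L) :=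
      Module.Flat.rTensor_preserves_injective_linearMap _ (IsFractionRing.injective R K)
    have hcomp := hfl.comp (TensorProduct.lid R L).symm.injective
    have heq : (fun y : L => (1 : K) ⊗ₜ[R] y) =
        ((Algebra.linearMap R K).rTensor L) ∘ (TensorProduct.lid R L).symm := by
      funext y
      simp [TensorProduct.lid_symm_apply]
    rw [heq]
    exact hcomp
  -- over K (hence over R), N^j is injective on M j
  have hMj0 : ∀ y ∈ M (j : ℤ), (N ^ j) y = 0 → y = 0 := by
    intro y hy hNy
    have h1 : ((1 : K) ⊗ₜ[R] y) ∈ (M (j : ℤ)).baseChange K :=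
      Submodule.tmul_mem_baseChange_of_mem 1 hy
    have h2 : ((N.baseChange K) ^ j) ((1 : K) ⊗ₜ[R] y) = 0 := by
      rw [← LinearMap.baseChange_pow]
      simp [hNy]
    have h3 := (hbijK j).2 _ h1 h2
    exact hmk_inj (by simpa using h3)
  -- the kernel of N^j is contained in the complement of M j
  have hkerQ : LinearMap.ker (N ^ j : L →ₗ[R] L) ≤ Q := by
    intro x hx
    have h1 : (N ^ j) (π (j : ℤ) x) = 0 := by
      rw [← hcomm, LinearMap.mem_ker.mp hx, map_zero]
    have h2 : π (j : ℤ) x = 0 := hMj0 _ (hπ_mem _ _) h1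
    have h3 := hsub x
    rwa [h2, sub_zero] at h3
  -- the kernel of N^j, a direct summand of L
  set P := LinearMap.ker (N ^ j : L →ₗ[R] L) with hP
  have hquotfree : Module.Free R (L ⧸ P) := by
    have e2 := (N ^ j : L →ₗ[R] L).quotKerEquivRange
    exact Module.Free.of_equiv e2.symm
  obtain ⟨πP, hπP1, hπP2⟩ := aux_exists_proj P
  -- kernels after base change
  have hkerK : LinearMap.ker ((N.baseChange K) ^ j) = P.baseChange K := by
    rw [← LinearMap.baseChange_pow, aux_ker_baseChange_flat]
  have hdK : Module.finrank K (P.baseChange K) = Module.finrank R P :=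
    aux_finrank_baseChange K P πP hπP1 hπP2
  have hdk : Module.finrank k (P.baseChange k) = Module.finrank R P :=
    aux_finrank_baseChange k P πP hπP1 hπP2
  have hkerk : LinearMap.ker ((N.baseChange k) ^ j) = P.baseChange k := by
    have hle : P.baseChange k ≤ LinearMap.ker ((N.baseChange k) ^ j) := by
      rw [← LinearMap.baseChange_pow]
      exact aux_baseChange_ker_le k _
    refine (Submodule.eq_of_le_of_finrank_le hle ?_).symm
    rw [hdk, ← hjord j, hkerK, hdK]
  -- dimensions of graded pieces after base change
  have hMfinK : ∀ i : ℤ, Module.finrank K ((M i).baseChange K) = Module.finrank R (M i) :=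
    fun i => aux_finrank_baseChange K (M i) (π i) (hπ_id i) (hπ_mem i)
  have hMfink : ∀ i : ℤ, Module.finrank k ((M i).baseChange k) = Module.finrank R (M i) :=
    fun i => aux_finrank_baseChange k (M i) (π i) (hπ_id i) (hπ_mem i)
  -- injectivity of the reduction on the graded piece
  have hinj : ∀ x ∈ (M (j : ℤ)).baseChange k, ((N.baseChange k) ^ j) x = 0 → x = 0 := by
    intro x hxM hx0
    have hxker : x ∈ P.baseChange k := by rw [← hkerk]; exact hx0
    have hxQ : x ∈ Q.baseChange k := aux_baseChange_mono k hkerQ hxker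
    have h1 : (π (j : ℤ)).baseChange k x = x :=
      aux_id_on_baseChange k (hπ_id (j : ℤ)) x hxM
    have h2 : (π (j : ℤ)).baseChange k x = 0 :=
      aux_zero_on_baseChange k hQ0 x hxQ
    rw [← h1, h2]
  refine ⟨?_, hinj⟩
  -- surjectivity of the reduction on the graded piece
  have hmaple : Submodule.map ((N.baseChange k) ^ j) ((M (j : ℤ)).baseChange k) ≤
      (M (-(j : ℤ))).baseChange k := by
    rw [← LinearMap.baseChange_pow]
    refine le_trans (aux_map_baseChange_le k _ _) (aux_baseChange_mono k ?_)
    have h1 := hpow j (j : ℤ)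
    have harith : (j : ℤ) - 2 * j = -(j : ℤ) := by ring
    rwa [harith] at h1
  have hchainK : Module.finrank K ((M (-(j : ℤ))).baseChange K) =
      Module.finrank K ((M (j : ℤ)).baseChange K) := by
    rw [← (hbijK j).1]
    exact aux_finrank_map_of_inj _ _ (hbijK j).2
  have hfinal : Module.finrank k ((M (-(j : ℤ))).baseChange k) ≤
      Module.finrank k (Submodule.map ((N.baseChange k) ^ j) ((M (j : ℤ)).baseChange k)) := by
    rw [aux_finrank_map_of_inj _ _ hinj]
    rw [hMfink, hMfink]
    rw [← hMfinK (-(j : ℤ)), ← hMfinK (j : ℤ)] at *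
    exact le_of_eq hchainK
  exact Submodule.eq_of_le_of_finrank_le hmaple hfinal
end

section
/- Let k be a field, L̄ a finite-dimensional k-vector space with a grading L̄ = ⊕_{i∈ℤ} L̄_i and a nilpotent endomorphism N̄ with N̄(L̄_i) ⊆ L̄_{i-2} such that for each k ≥ 0, N̄^k : L̄_k → L̄_{-k} is an isomorphism. Then any linear map F : L̄ → L̄ that commutes with N̄ and satisfies F(L̄_i) ⊆ L̄_{i+2} for all i is zero. -/
/-- Let `k` be a field, `V` a finite-dimensional `k`-vector space with a grading
`V = ⊕_{i∈ℤ} M_i` and a nilpotent endomorphism `N` with `N(M_i) ⊆ M_{i-2}` such that for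
each `j ≥ 0`, `N^j : M_j → M_{-j}` is an isomorphism. Then any linear map `F : V → V` that
commutes with `N` and satisfies `F(M_i) ⊆ M_{i+2}` for all `i` is zero. -/
theorem commuting_raising_operator_is_zero
    (k : Type*) [Field k] (V : Type*) [AddCommGroup V] [Module k V] [FiniteDimensional k V]
    (M : ℤ → Submodule k V) (hdirect : DirectSum.IsInternal M)
    (N : V →ₗ[k] V) (hnil : IsNilpotent N)
    (hNM : ∀ i : ℤ, (M i).map N ≤ M (i - 2))
    (hbij : ∀ j : ℕ, Submodule.map (N ^ j) (M (j : ℤ)) = M (-(j : ℤ)) ∧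
      ∀ x ∈ M (j : ℤ), (N ^ j) x = 0 → x = 0)
    (F : V →ₗ[k] V) (hFN : F ∘ₗ N = N ∘ₗ F)
    (hFM : ∀ i : ℤ, (M i).map F ≤ M (i + 2)) :
    F = 0 := by
  obtain ⟨e, he⟩ := hnil
  -- F commutes with powers of N
  have hcomm : ∀ (s : ℕ) (x : V), F ((N ^ s) x) = (N ^ s) (F x) := by
    intro s
    induction s with
    | zero => simp
    | succ s ih =>
      intro x
      have h1 : ∀ v, F (N v) = N (F v) := fun v => LinearMap.ext_iff.mp hFN v
      calc F ((N ^ (s + 1)) x) = F (N ((N ^ s) x)) := by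
              rw [pow_succ', Module.End.mul_apply]
        _ = N (F ((N ^ s) x)) := h1 _
        _ = N ((N ^ s) (F x)) := by rw [ih]
        _ = (N ^ (s + 1)) (F x) := by rw [pow_succ', Module.End.mul_apply]
  -- powers of N lower degree
  have hNpow : ∀ (s : ℕ) (i : ℤ) (x : V), x ∈ M i → (N ^ s) x ∈ M (i - 2 * s) := by
    intro s
    induction s with
    | zero => intro i x hx; simpa using hx
    | succ s ih =>
      intro i x hx
      have h1 : (N ^ (s + 1)) x = N ((N ^ s) x) := by
        rw [pow_succ', Module.End.mul_apply]
      have h2 : N ((N ^ s) x) ∈ M (i - 2 * s - 2) :=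
        hNM _ ⟨_, ih i x hx, rfl⟩
      rw [h1]
      convert h2 using 2
      push_cast; ring
  -- M j = 0 for j ≥ e
  have hMzero : ∀ j : ℕ, e ≤ j → ∀ x ∈ M (j : ℤ), x = 0 := by
    intro j hj x hx
    refine (hbij j).2 x hx ?_
    have : (N : V →ₗ[k] V) ^ j = (N ^ (j - e)) ∘ₗ (N ^ e) := by
      rw [← Module.End.mul_eq_comp, ← pow_add]
      congr 1; omega
    rw [this, LinearMap.comp_apply, he]
    simp
  -- main descending induction
  have hpos : ∀ (t j : ℕ), e ≤ j + t → ∀ x ∈ M (j : ℤ), F x = 0 := by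
    intro t
    induction t with
    | zero =>
      intro j hj x hx
      rw [hMzero j (by omega) x hx, map_zero]
    | succ t ih =>
      intro j hj x hx
      -- N^(j+1) x ∈ M (-(j+2))
      have h1 : (N ^ (j + 1)) x ∈ M (-((j + 2 : ℕ) : ℤ)) := by
        have := hNpow (j + 1) (j : ℤ) x hx
        convert this using 2
        push_cast; ring
      rw [← (hbij (j + 2)).1] at h1
      obtain ⟨y, hy, hyx⟩ := h1
      -- z := x - N y is primitive
      set z := x - N y with hz
      have hNy : N y ∈ M (j : ℤ) := by
        have := hNM _ ⟨y, hy, rfl⟩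
        convert this using 2
        push_cast; ring
      have hzM : z ∈ M (j : ℤ) := Submodule.sub_mem _ hx hNy
      have hzprim : (N ^ (j + 1)) z = 0 := by
        have : (N ^ (j + 1)) (N y) = (N ^ (j + 2)) y := by
          rw [← Module.End.mul_apply, ← pow_succ]
        rw [hz, map_sub, this, hyx, sub_self]
      -- F z ∈ M (j+2) and N^(j+2) (F z) = 0, so F z = 0
      have hFzM : F z ∈ M (((j + 2 : ℕ) : ℤ)) := by
        have h := hFM _ ⟨z, hzM, rfl⟩
        have hcast : ((j : ℤ) + 2) = ((j + 2 : ℕ) : ℤ) := by push_cast; ring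
        rwa [hcast] at h
      have hFz : F z = 0 := by
        refine (hbij (j + 2)).2 _ hFzM ?_
        have : (N ^ (j + 2)) (F z) = N ((N ^ (j + 1)) (F z)) := by
          rw [pow_succ', Module.End.mul_apply]
        rw [this, ← hcomm, hzprim, map_zero, map_zero]
      -- F (N y) = N (F y) = 0 by induction at j + 2
      have hFy : F y = 0 := ih (j + 2) (by omega) y hy
      have hFNy : F (N y) = 0 := by
        have h1 : F (N y) = N (F y) := LinearMap.ext_iff.mp hFN y
        rw [h1, hFy, map_zero]
      have : F x = F z + F (N y) := by rw [hz, map_sub]; abel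
      rw [this, hFz, hFNy, add_zero]
  -- F vanishes on every M i
  have hall : ∀ (i : ℤ), ∀ x ∈ M i, F x = 0 := by
    intro i x hx
    rcases le_or_gt 0 i with hi | hi
    · lift i to ℕ using hi
      exact hpos e i (by omega) x hx
    · obtain ⟨j, hj⟩ : ∃ j : ℕ, i = -(j : ℤ) := ⟨(-i).toNat, by omega⟩
      rw [hj, ← (hbij j).1] at hx
      obtain ⟨y, hy, hyx⟩ := hx
      rw [← hyx, hcomm, hpos e j (by omega) y hy, map_zero]
  -- conclude
  have htop : ⨆ i, M i = ⊤ := hdirect.submodule_iSup_eq_top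
  ext x
  have hx : x ∈ ⨆ i, M i := htop ▸ Submodule.mem_top
  simp only [LinearMap.zero_apply]
  refine Submodule.iSup_induction M (motive := fun v => F v = 0) hx hall (map_zero F) ?_
  intro a b ha hb
  rw [map_add, ha, hb, add_zero]
end

section
/- Let R be a complete Noetherian local ring with maximal ideal 𝔪 that is an O-algebra over a complete DVR O, and suppose R is a finite O-algebra of Krull dimension at least 1 which is also O-flat (or: R has dim R ≥ 1 and is a finite O-module). Then there exists an O-algebra homomorphism R → O̅ into an algebraic closure of Frac(O); equivalently, R has a prime ideal with residue field of characteristic zero. -/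
theorem noZeroSMulDivisors_of_algebraMap_injective' {A B : Type} [CommRing A] [CommRing B]
    [NoZeroDivisors B] [Algebra A B] (hi : Function.Injective (algebraMap A B)) :
    NoZeroSMulDivisors A B :=
  ⟨fun {c x} h => by
    rw [Algebra.smul_def, mul_eq_zero] at h
    exact h.imp_left (fun h' => hi (by rw [h', map_zero]))⟩

/-- Let `O` be a complete DVR whose fraction field has characteristic zero (e.g. `ℤ_ℓ`),
and let `R` be a complete Noetherian local `O`-algebra which is finite as an `O`-module and
has Krull dimension at least `1`. Then there exists an `O`-algebra homomorphism
`R → O̅` into an algebraic closure of `Frac(O)`; equivalently, `R` has a point in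
characteristic zero. -/
theorem exists_char_zero_point_of_finite_flat_dim_ge_one
    (O : Type) [CommRing O] [IsDomain O] [IsDiscreteValuationRing O]
    [IsAdicComplete (IsLocalRing.maximalIdeal O) O]
    [CharZero (FractionRing O)]
    (R : Type) [CommRing R] [IsLocalRing R] [IsNoetherianRing R]
    [IsAdicComplete (IsLocalRing.maximalIdeal R) R]
    [Algebra O R] [Module.Finite O R]
    (hdim : 1 ≤ ringKrullDim R) :
    ∃ f : R →+* AlgebraicClosure (FractionRing O),
      ∀ a : O, f (algebraMap O R a) =
        algebraMap (FractionRing O) (AlgebraicClosure (FractionRing O))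
          (algebraMap O (FractionRing O) a) := by
  classical
  -- Step 1: from `1 ≤ ringKrullDim R` get two primes `p0 < q0`.
  obtain ⟨p0, q0, hpq⟩ : ∃ p q : PrimeSpectrum R, p < q := by
    by_contra h
    push_neg at h
    have hle : ringKrullDim R ≤ 0 := by
      rw [ringKrullDim, Order.krullDim]
      refine iSup_le fun l => ?_
      have hl : l.length = 0 := by
        by_contra hl
        exact h _ _ (l.step ⟨0, Nat.pos_of_ne_zero hl⟩)
      simp [hl]
    have : (1 : WithBot (WithTop ℕ)) ≤ 0 := hdim.trans hle
    norm_num at this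
  set I := p0.asIdeal with hI
  haveI : I.IsPrime := p0.isPrime
  -- `R ⧸ I` is a finite `O`-module
  haveI : Module.Finite O (R ⧸ I) :=
    Module.Finite.of_surjective (Ideal.Quotient.mkₐ O I).toLinearMap
      (Ideal.Quotient.mkₐ_surjective O I)
  haveI : Algebra.IsIntegral O (R ⧸ I) := Algebra.IsIntegral.of_finite O (R ⧸ I)
  -- Step 2: the structure map `O → R ⧸ I` is injective.
  have hinj : Function.Injective (algebraMap O (R ⧸ I)) := by
    rw [RingHom.injective_iff_ker_eq_bot]
    by_contra hJ
    set J := RingHom.ker (algebraMap O (R ⧸ I)) with hJdef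
    haveI hJp : J.IsPrime := RingHom.ker_isPrime _
    haveI hJm : J.IsMaximal := IsPrime.to_maximal_ideal hJ
    letI : Algebra (O ⧸ J) (R ⧸ I) :=
      (Ideal.Quotient.lift J (algebraMap O (R ⧸ I)) (fun a ha => ha)).toAlgebra
    haveI : IsScalarTower O (O ⧸ J) (R ⧸ I) :=
      IsScalarTower.of_algebraMap_eq fun a => by
        simp [RingHom.algebraMap_toAlgebra]
        exact (Ideal.Quotient.lift_mk _ _ _).symm
    haveI : Module.Finite (O ⧸ J) (R ⧸ I) :=
      Module.Finite.of_restrictScalars_finite O (O ⧸ J) (R ⧸ I)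
    haveI : Algebra.IsIntegral (O ⧸ J) (R ⧸ I) :=
      Algebra.IsIntegral.of_finite (O ⧸ J) (R ⧸ I)
    letI : Field (O ⧸ J) := Ideal.Quotient.field J
    have hfield : IsField (R ⧸ I) :=
      isField_of_isIntegral_of_isField' (Field.toIsField (O ⧸ J))
    have hImax : I.IsMaximal := Ideal.Quotient.maximal_of_isField I hfield
    have : I = q0.asIdeal := hImax.eq_of_le q0.isPrime.ne_top (le_of_lt hpq)
    exact (ne_of_lt hpq) (PrimeSpectrum.ext this)
  haveI : NoZeroSMulDivisors O (R ⧸ I) :=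
    noZeroSMulDivisors_of_algebraMap_injective' hinj
  haveI : NoZeroSMulDivisors O (AlgebraicClosure (FractionRing O)) := by
    refine noZeroSMulDivisors_of_algebraMap_injective' ?_
    rw [IsScalarTower.algebraMap_eq O (FractionRing O) (AlgebraicClosure (FractionRing O)),
      RingHom.coe_comp]
    exact (RingHom.injective
      (algebraMap (FractionRing O) (AlgebraicClosure (FractionRing O)))).comp
      (IsFractionRing.injective O (FractionRing O))
  haveI : Algebra.IsAlgebraic O (R ⧸ I) := Algebra.IsIntegral.isAlgebraic
  -- Step 3: lift `R ⧸ I` into the algebraic closure.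
  let g : (R ⧸ I) →ₐ[O] AlgebraicClosure (FractionRing O) := IsAlgClosed.lift
  refine ⟨g.toRingHom.comp (Ideal.Quotient.mk I), fun a => ?_⟩
  have h1 : (Ideal.Quotient.mk I) (algebraMap O R a) = algebraMap O (R ⧸ I) a := rfl
  simp only [RingHom.comp_apply, h1, AlgHom.toRingHom_eq_coe, RingHom.coe_coe]
  rw [AlgHom.commutes,
    IsScalarTower.algebraMap_apply O (FractionRing O) (AlgebraicClosure (FractionRing O))]
end
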